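/- arXiv:2509.07329 — 3 statements merged into one kernel-verified Lean document; each statement's English description precedes it below -/
import Mathlib

section
/- Let F : ℝ → ℝ be integrable, even, real-valued, with ∫_ℝ F(ξ) dξ = 1, and define F̂(t) = ∫_ℝ F(u) cos(ut) du. Then for all γ, t ∈ ℝ one has 1 − F̂(t)·cos(γt) = ∫_ℝ (1 − cos(ξt)) · F(γ − ξ) dξ. -/
open MeasureTheory Real

/-- Two-way Fejér identity, general form: for any even real integrable probability
density `F` with cosine transform `F̂(t) = ∫ F(u) cos(ut) du`, one has
`1 − F̂(t) cos(γt) = ∫ (1 − cos(ξt)) F(γ − ξ) dξ` for all `γ, t`. -/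
theorem two_way_fejer_identity (F : ℝ → ℝ)
    (hF : Integrable F (volume : Measure ℝ)) (hFeven : ∀ x, F (-x) = F x)
    (hFmass : ∫ ξ : ℝ, F ξ = 1) (γ t : ℝ) :
    1 - (∫ u : ℝ, F u * Real.cos (u * t)) * Real.cos (γ * t)
      = ∫ ξ : ℝ, (1 - Real.cos (ξ * t)) * F (γ - ξ) := by
  -- integrability of F times a bounded trig function
  have hbd : ∀ g : ℝ → ℝ, Measurable g → (∀ x, |g x| ≤ 1) →
      Integrable (fun u => g u * F u) (volume : Measure ℝ) := by
    intro g hg hgb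
    exact hF.bdd_mul hg.aestronglyMeasurable (c := 1) (Filter.Eventually.of_forall fun x => by simpa using hgb x)
  have hcos : Integrable (fun u : ℝ => Real.cos (u * t) * F u) volume :=
    hbd _ (by fun_prop) (fun x => abs_cos_le_one _)
  have hsin : Integrable (fun u : ℝ => Real.sin (u * t) * F u) volume :=
    hbd _ (by fun_prop) (fun x => abs_sin_le_one _)
  -- change of variables ξ ↦ γ - ξ
  have hsub : ∀ f : ℝ → ℝ, (∫ ξ : ℝ, f (γ - ξ)) = ∫ ξ : ℝ, f ξ := by
    intro f
    have h1 : (∫ ξ : ℝ, f (γ - ξ)) = ∫ ξ : ℝ, f (γ + ξ) := by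
      simpa [sub_eq_add_neg] using
        MeasureTheory.integral_neg_eq_self (fun ξ : ℝ => f (γ + ξ)) volume
    rw [h1, MeasureTheory.integral_add_left_eq_self]
  -- odd function integrates to zero
  have hodd : (∫ u : ℝ, Real.sin (u * t) * F u) = 0 := by
    have h1 : (∫ u : ℝ, Real.sin (u * t) * F u)
        = ∫ u : ℝ, Real.sin (-u * t) * F (-u) :=
      (MeasureTheory.integral_neg_eq_self _ _).symm
    have h2 : (∫ u : ℝ, Real.sin (-u * t) * F (-u))
        = - ∫ u : ℝ, Real.sin (u * t) * F u := by
      rw [← integral_neg]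
      congr 1 with u
      simp [hFeven, neg_mul]
    linarith [h1.trans h2]
  calc 1 - (∫ u : ℝ, F u * Real.cos (u * t)) * Real.cos (γ * t)
      = (∫ ξ : ℝ, F ξ)
        - ((Real.cos (γ * t) * ∫ u : ℝ, Real.cos (u * t) * F u)
           + (Real.sin (γ * t) * ∫ u : ℝ, Real.sin (u * t) * F u)) := by
        rw [hFmass, hodd, mul_zero, add_zero]
        have h : (∫ u : ℝ, F u * Real.cos (u * t)) = ∫ u : ℝ, Real.cos (u * t) * F u := by
          simp_rw [mul_comm]
        rw [h]; ring
    _ = ∫ u : ℝ, (1 - Real.cos ((γ - u) * t)) * F u := by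
        rw [← integral_const_mul (Real.cos (γ * t)), ← integral_const_mul (Real.sin (γ * t)),
          ← integral_add (hcos.const_mul _) (hsin.const_mul _)]
        have hX : Integrable (fun a : ℝ => Real.cos (γ * t) * (Real.cos (a * t) * F a)
            + Real.sin (γ * t) * (Real.sin (a * t) * F a)) volume :=
          (hcos.const_mul _).add (hsin.const_mul _)
        rw [← integral_sub hF hX]
        congr 1 with u
        have h : Real.cos ((γ - u) * t)
            = Real.cos (γ * t) * Real.cos (u * t) + Real.sin (γ * t) * Real.sin (u * t) := by
          rw [sub_mul, Real.cos_sub]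
        rw [h]; ring
    _ = ∫ ξ : ℝ, (1 - Real.cos (ξ * t)) * F (γ - ξ) := by
        rw [← hsub (fun u => (1 - Real.cos ((γ - u) * t)) * F u)]
        congr 1 with ξ
        ring_nf
end

section
/- Let Λ > 0 and let F_Λ be the Fejér kernel on ℝ. Then for all γ, t ∈ ℝ one has 1 − max(1 − |t|/Λ, 0)·cos(γt) = ∫_ℝ (1 − cos(ξt)) · F_Λ(γ − ξ) dξ. -/
open MeasureTheory Real

/-- The Fejér kernel on ℝ: `F_Λ(x) = 2 sin²(Λx/2)/(π Λ x²)` for `x ≠ 0`,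
with value `Λ/(2π)` at `x = 0`. -/
noncomputable def fejerKernel (Λ : ℝ) (x : ℝ) : ℝ :=
  if x = 0 then Λ / (2 * π) else 2 * Real.sin (Λ * x / 2) ^ 2 / (π * Λ * x ^ 2)

lemma fejer_even (Λ x : ℝ) : fejerKernel Λ (-x) = fejerKernel Λ x := by
  unfold fejerKernel
  rcases eq_or_ne x 0 with h | h
  · simp [h]
  · rw [if_neg (neg_ne_zero.mpr h), if_neg h]
    rw [show Λ * -x / 2 = -(Λ * x / 2) by ring, Real.sin_neg]
    ring

lemma fejer_nonneg {Λ : ℝ} (hΛ : 0 < Λ) (x : ℝ) : 0 ≤ fejerKernel Λ x := by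
  unfold fejerKernel
  rcases eq_or_ne x 0 with h | h
  · rw [if_pos h]; positivity
  · rw [if_neg h]; positivity

lemma fejer_le {Λ : ℝ} (hΛ : 0 < Λ) (x : ℝ) : fejerKernel Λ x ≤ Λ / (2 * π) := by
  unfold fejerKernel
  rcases eq_or_ne x 0 with h | h
  · rw [if_pos h]
  · rw [if_neg h]
    have hs : Real.sin (Λ * x / 2) ^ 2 ≤ (Λ * x / 2) ^ 2 := Real.sin_sq_le_sq
    have hx2 : (0:ℝ) < x ^ 2 := by positivity
    rw [div_le_div_iff₀ (by positivity) (by positivity)]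
    nlinarith [pi_pos]

lemma fejer_sq_le {Λ : ℝ} (hΛ : 0 < Λ) (x : ℝ) : x ^ 2 * fejerKernel Λ x ≤ 2 / (π * Λ) := by
  unfold fejerKernel
  rcases eq_or_ne x 0 with h | h
  · rw [if_pos h, h]; norm_num; positivity
  · rw [if_neg h]
    have hs : Real.sin (Λ * x / 2) ^ 2 ≤ 1 := Real.sin_sq_le_one _
    have hx2 : (0:ℝ) ≠ x ^ 2 := fun hh => h (by nlinarith [sq_nonneg x])
    have : x ^ 2 * (2 * Real.sin (Λ * x / 2) ^ 2 / (π * Λ * x ^ 2))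
        = 2 * Real.sin (Λ * x / 2) ^ 2 / (π * Λ) := by
      field_simp
    rw [this]
    gcongr
    nlinarith

lemma fejer_measurable (Λ : ℝ) : Measurable (fejerKernel Λ) := by
  unfold fejerKernel
  exact Measurable.ite (measurableSet_singleton 0) measurable_const (by fun_prop)

lemma fejer_integrable {Λ : ℝ} (hΛ : 0 < Λ) : Integrable (fejerKernel Λ) := by
  have hC : ∀ x : ℝ, ‖fejerKernel Λ x‖ ≤ (Λ / (2*π) + 2/(π*Λ)) * (1 + x^2)⁻¹ := by
    intro x
    rw [Real.norm_eq_abs, abs_of_nonneg (fejer_nonneg hΛ x), mul_comm, inv_mul_eq_div,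
      le_div_iff₀ (by positivity)]
    nlinarith [fejer_le hΛ x, fejer_sq_le hΛ x]
  exact (integrable_inv_one_add_sq.const_mul _).mono'
    ((fejer_measurable Λ).aestronglyMeasurable) (Filter.Eventually.of_forall hC)
section B
variable {Λ : ℝ}

lemma triangle_cont (Λ : ℝ) : Continuous (fun s : ℝ => max (1 - |s| / Λ) 0) :=
  (continuous_const.sub (continuous_abs.div_const _)).max continuous_const

lemma half_integral {Λ : ℝ} (hΛ : 0 < Λ) (c : ℝ) :
    ∫ s in (0:ℝ)..Λ, max (1 - |s| / Λ) 0 * Real.cos (c * s)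
      = π * fejerKernel Λ c := by
  have hcong : ∀ s ∈ Set.uIcc (0:ℝ) Λ,
      max (1 - |s| / Λ) 0 * Real.cos (c * s) = (1 - s / Λ) * Real.cos (c * s) := by
    intro s hs
    rw [Set.uIcc_of_le hΛ.le] at hs
    rw [abs_of_nonneg hs.1, max_eq_left (by
      have := hs.2
      rw [sub_nonneg, div_le_one hΛ]
      exact this)]
  rw [intervalIntegral.integral_congr hcong]
  rcases eq_or_ne c 0 with hc | hc
  · simp only [hc, zero_mul, Real.cos_zero, mul_one]
    rw [show (fun s : ℝ => (1 - s / Λ)) = (fun s : ℝ => 1 - s / Λ) from rfl]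
    rw [intervalIntegral.integral_sub intervalIntegrable_const
      ((intervalIntegral.intervalIntegrable_id).div_const _)]
    rw [intervalIntegral.integral_div, integral_id, intervalIntegral.integral_const]
    unfold fejerKernel
    rw [if_pos rfl]
    field_simp
    ring
  · -- FTC with antiderivative H
    have key : ∀ s : ℝ, HasDerivAt
        (fun s : ℝ => (1 - s / Λ) * Real.sin (c * s) / c - Real.cos (c * s) / (Λ * c ^ 2))
        ((1 - s / Λ) * Real.cos (c * s)) s := by
      intro s
      have h1 : HasDerivAt (fun s : ℝ => Real.sin (c * s)) (Real.cos (c * s) * c) s := by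
        simpa [mul_comm, Function.comp_def] using (Real.hasDerivAt_sin (c * s)).comp s
          ((hasDerivAt_id s).const_mul c)
      have h2 : HasDerivAt (fun s : ℝ => Real.cos (c * s)) (-Real.sin (c * s) * c) s := by
        simpa [mul_comm, Function.comp_def] using (Real.hasDerivAt_cos (c * s)).comp s
          ((hasDerivAt_id s).const_mul c)
      have h3 : HasDerivAt (fun s : ℝ => 1 - s / Λ) (-(1 / Λ)) s := by
        simpa using (hasDerivAt_id s).div_const Λ |>.const_sub 1
      have := ((h3.mul h1).div_const c).sub (h2.div_const (Λ * c ^ 2))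
      exact this.congr_deriv (by field_simp; ring)
    rw [intervalIntegral.integral_eq_sub_of_hasDerivAt (fun s _ => key s)
      (((continuous_const.sub (continuous_id.div_const _)).mul
        (Real.continuous_cos.comp (continuous_const.mul continuous_id))).intervalIntegrable _ _)]
    have h1 : Real.sin (Λ * c / 2) ^ 2 = 1/2 - Real.cos (c * Λ) / 2 := by
      rw [show c * Λ = 2 * (Λ * c / 2) by ring]
      exact Real.sin_sq_eq_half_sub _
    unfold fejerKernel
    rw [if_neg hc]
    field_simp
    first
    | linear_combination (2*π*Λ^2*c^4) * h1
    | linear_combination (-2*π*Λ^2*c^4) * h1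
    | nlinarith [h1, sq_nonneg c, sq_nonneg Λ]
    | (simp only [mul_zero, Real.sin_zero, Real.cos_zero]; rw [mul_comm c Λ] at h1; linear_combination (-2) * h1)

lemma triangle_cos_integral {Λ : ℝ} (hΛ : 0 < Λ) (c : ℝ) :
    ∫ s : ℝ, max (1 - |s| / Λ) 0 * Real.cos (c * s) = 2 * π * fejerKernel Λ c := by
  set f : ℝ → ℝ := fun s => max (1 - |s| / Λ) 0 * Real.cos (c * s) with hf
  have hfc : Continuous f := (triangle_cont Λ).mul
    (Real.continuous_cos.comp (continuous_const.mul continuous_id))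
  have hsupp : ∀ s : ℝ, s ∉ Set.Icc (-Λ) Λ → f s = 0 := by
    intro s hs
    have : Λ < |s| := by
      rcases abs_cases s with ⟨h1, _⟩ | ⟨h1, _⟩ <;>
        (simp only [Set.mem_Icc, not_and_or, not_le] at hs; rcases hs with h | h <;> linarith)
    have : max (1 - |s| / Λ) 0 = 0 := max_eq_right (by
      rw [sub_nonpos, le_div_iff₀ hΛ, one_mul]; exact this.le)
    rw [hf]; simp [this]
  have heven : ∀ s : ℝ, f (-s) = f s := by
    intro s; simp only [hf, abs_neg, mul_neg, Real.cos_neg]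
  calc ∫ s : ℝ, f s = ∫ s in Set.Icc (-Λ) Λ, f s :=
        (setIntegral_eq_integral_of_forall_compl_eq_zero hsupp).symm
    _ = ∫ s in Set.Ioc (-Λ) Λ, f s := integral_Icc_eq_integral_Ioc
    _ = ∫ s in (-Λ)..Λ, f s := (intervalIntegral.integral_of_le (by linarith)).symm
    _ = (∫ s in (-Λ)..(0:ℝ), f s) + ∫ s in (0:ℝ)..Λ, f s :=
        (intervalIntegral.integral_add_adjacent_intervals
          (hfc.intervalIntegrable _ _) (hfc.intervalIntegrable _ _)).symm
    _ = 2 * π * fejerKernel Λ c := by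
        have h2 : (∫ s in (0:ℝ)..Λ, f (-s)) = ∫ s in (-Λ)..(0:ℝ), f s := by
          simpa using intervalIntegral.integral_comp_neg (a := (0:ℝ)) (b := Λ) f
        have h3 : (∫ s in (0:ℝ)..Λ, f (-s)) = ∫ s in (0:ℝ)..Λ, f s := by
          simp only [heven]
        have : (∫ s in (-Λ)..(0:ℝ), f s) = ∫ s in (0:ℝ)..Λ, f s := by
          rw [← h2]; exact h3
        rw [this, half_integral hΛ c]
        ring
end B
section C

lemma integral_odd_zero {f : ℝ → ℝ} (hodd : ∀ x, f (-x) = - f x) : ∫ x : ℝ, f x = 0 := by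
  have h := MeasureTheory.integral_neg_eq_self f (volume : Measure ℝ)
  simp_rw [hodd, integral_neg] at h
  linarith

lemma fejer_sin_integral {Λ : ℝ} (hΛ : 0 < Λ) (t : ℝ) :
    ∫ u : ℝ, Real.sin (u * t) * fejerKernel Λ u = 0 := by
  apply integral_odd_zero
  intro u
  rw [fejer_even, show -u * t = -(u * t) by ring, Real.sin_neg]
  ring

lemma fejer_cos_integrable {Λ : ℝ} (hΛ : 0 < Λ) (g : ℝ → ℝ)
    (hg : Continuous g) (hgb : ∀ x, |g x| ≤ 1) :
    Integrable (fun u : ℝ => g u * fejerKernel Λ u) := by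
  apply (fejer_integrable hΛ).mono'
    ((hg.measurable.mul (fejer_measurable Λ)).aestronglyMeasurable)
  filter_upwards with u
  rw [Real.norm_eq_abs, Pi.mul_apply, abs_mul, abs_of_nonneg (fejer_nonneg hΛ u)]
  calc |g u| * fejerKernel Λ u ≤ 1 * fejerKernel Λ u := by
        exact mul_le_mul_of_nonneg_right (hgb u) (fejer_nonneg hΛ u)
    _ = fejerKernel Λ u := one_mul _

open Complex in
lemma exp_smul_ofReal (θ r : ℝ) :
    Complex.exp (↑θ * Complex.I) • (r : ℂ) = ↑(r * Real.cos θ) + ↑(r * Real.sin θ) * Complex.I := by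
  rw [Complex.exp_mul_I, smul_eq_mul]
  push_cast
  ring

/-- Splitting a complex integral of `exp(iθ v) * (g v : ℂ)` into real and imaginary parts. -/
lemma integral_exp_smul_split (θ g : ℝ → ℝ)
    (h1 : Integrable (fun v => g v * Real.cos (θ v)))
    (h2 : Integrable (fun v => g v * Real.sin (θ v))) :
    ∫ v : ℝ, Complex.exp (↑(θ v) * Complex.I) • (↑(g v) : ℂ)
      = ↑(∫ v : ℝ, g v * Real.cos (θ v)) + ↑(∫ v : ℝ, g v * Real.sin (θ v)) * Complex.I := by
  have : (fun v : ℝ => Complex.exp (↑(θ v) * Complex.I) • (↑(g v) : ℂ))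
      = fun v => (↑(g v * Real.cos (θ v)) : ℂ) + (↑(g v * Real.sin (θ v)) : ℂ) * Complex.I := by
    funext v; exact exp_smul_ofReal (θ v) (g v)
  have h1' : Integrable (fun v : ℝ => ((g v * Real.cos (θ v) : ℝ) : ℂ)) := h1.ofReal
  have h2' : Integrable (fun v : ℝ => ((g v * Real.sin (θ v) : ℝ) : ℂ) * Complex.I) :=
    (h2.ofReal (𝕜 := ℂ)).mul_const Complex.I
  have hre : ∫ v : ℝ, ((g v * Real.cos (θ v) : ℝ) : ℂ)
      = ((∫ v : ℝ, g v * Real.cos (θ v) : ℝ) : ℂ) := integral_ofReal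
  have him : ∫ v : ℝ, ((g v * Real.sin (θ v) : ℝ) : ℂ)
      = ((∫ v : ℝ, g v * Real.sin (θ v) : ℝ) : ℂ) := integral_ofReal
  rw [this, integral_add h1' h2', MeasureTheory.integral_mul_const, hre, him]

lemma triangle_fourier {Λ : ℝ} (hΛ : 0 < Λ) (x : ℝ) :
    FourierTransform.fourier (fun s : ℝ => ((max (1 - |s| / Λ) 0 : ℝ) : ℂ)) x
      = ((2 * π * fejerKernel Λ (2 * π * x) : ℝ) : ℂ) := by
  rw [Real.fourier_real_eq_integral_exp_smul]
  have hψc := triangle_cont Λ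
  have hθ : ∀ v : ℝ, (-2 * π * v * x : ℝ) = -((2 * π * x) * v) := by intro v; ring
  have hcc : Continuous fun v : ℝ => max (1 - |v| / Λ) 0 * Real.cos (-2 * π * v * x) := by
    apply hψc.mul; fun_prop
  have hcs : Continuous fun v : ℝ => max (1 - |v| / Λ) 0 * Real.sin (-2 * π * v * x) := by
    apply hψc.mul; fun_prop
  have hsupp : ∀ s : ℝ, s ∉ Set.Icc (-Λ) Λ → max (1 - |s| / Λ) 0 = 0 := by
    intro s hs
    apply max_eq_right
    rw [sub_nonpos, le_div_iff₀ hΛ, one_mul]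
    rcases abs_cases s with ⟨h1, _⟩ | ⟨h1, _⟩ <;>
      (simp only [Set.mem_Icc, not_and_or, not_le] at hs; rcases hs with h | h <;> linarith)
  have hKc : HasCompactSupport fun v : ℝ => max (1 - |v| / Λ) 0 * Real.cos (-2 * π * v * x) :=
    HasCompactSupport.intro isCompact_Icc (fun s hs => by rw [hsupp s hs, zero_mul])
  have hKs : HasCompactSupport fun v : ℝ => max (1 - |v| / Λ) 0 * Real.sin (-2 * π * v * x) :=
    HasCompactSupport.intro isCompact_Icc (fun s hs => by rw [hsupp s hs, zero_mul])
  rw [integral_exp_smul_split (fun v => -2 * π * v * x) (fun v => max (1 - |v| / Λ) 0)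
    (hcc.integrable_of_hasCompactSupport hKc) (hcs.integrable_of_hasCompactSupport hKs)]
  have hIm : (∫ v : ℝ, max (1 - |v| / Λ) 0 * Real.sin (-2 * π * v * x)) = 0 := by
    apply integral_odd_zero
    intro v
    rw [abs_neg, show (-2 * π * -v * x : ℝ) = -(-2 * π * v * x) by ring, Real.sin_neg]
    ring
  have hRe : (∫ v : ℝ, max (1 - |v| / Λ) 0 * Real.cos (-2 * π * v * x))
      = 2 * π * fejerKernel Λ (2 * π * x) := by
    have : ∀ v : ℝ, max (1 - |v| / Λ) 0 * Real.cos (-2 * π * v * x)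
        = max (1 - |v| / Λ) 0 * Real.cos ((2 * π * x) * v) := by
      intro v; rw [hθ v, Real.cos_neg]
    simp_rw [this]
    exact triangle_cos_integral hΛ (2 * π * x)
  rw [hIm, hRe]
  simp

end C
section D

lemma triangle_supp {Λ : ℝ} (hΛ : 0 < Λ) : ∀ s : ℝ, s ∉ Set.Icc (-Λ) Λ → max (1 - |s| / Λ) 0 = 0 := by
  intro s hs
  apply max_eq_right
  rw [sub_nonpos, le_div_iff₀ hΛ, one_mul]
  rcases abs_cases s with ⟨h1, _⟩ | ⟨h1, _⟩ <;>
    (simp only [Set.mem_Icc, not_and_or, not_le] at hs; rcases hs with h | h <;> linarith)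

lemma fejer_cos_integral {Λ : ℝ} (hΛ : 0 < Λ) (t : ℝ) :
    ∫ u : ℝ, Real.cos (u * t) * fejerKernel Λ u = max (1 - |t| / Λ) 0 := by
  set ψ : ℝ → ℂ := fun s => ((max (1 - |s| / Λ) 0 : ℝ) : ℂ) with hψ
  have hψcont : Continuous ψ := Complex.continuous_ofReal.comp (triangle_cont Λ)
  have hψsupp : HasCompactSupport ψ :=
    HasCompactSupport.intro isCompact_Icc (fun s hs => by
      simp only [hψ]; rw [triangle_supp hΛ s hs]; simp)
  have hψint : Integrable ψ := hψcont.integrable_of_hasCompactSupport hψsupp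
  have hfun : FourierTransform.fourier ψ
      = fun x : ℝ => ((2 * π * fejerKernel Λ (2 * π * x) : ℝ) : ℂ) :=
    funext (triangle_fourier hΛ)
  have h2π : (2 * π : ℝ) ≠ 0 := by positivity
  have h𝓕int : Integrable (FourierTransform.fourier ψ) := by
    rw [hfun]
    exact (((fejer_integrable hΛ).comp_mul_left' h2π).const_mul (2 * π)).ofReal
  have hinv := hψcont.fourierInv_fourier_eq hψint h𝓕int
  have ht := congrFun hinv t
  rw [Real.fourierInv_eq_fourier_neg, hfun,
    Real.fourier_real_eq_integral_exp_smul] at ht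
  set G : ℝ → ℂ := fun u => Complex.exp (↑(u * t) * Complex.I)
    • ((2 * π * fejerKernel Λ u : ℝ) : ℂ) with hG
  have hGcomp : (fun v : ℝ => Complex.exp (↑(-2 * π * v * -t) * Complex.I)
      • ((2 * π * fejerKernel Λ (2 * π * v) : ℝ) : ℂ)) = fun v => G (2 * π * v) := by
    funext v
    rw [hG, show (-2 * π * v * -t : ℝ) = (2 * π * v) * t by ring]
  rw [hGcomp, MeasureTheory.Measure.integral_comp_mul_left G (2 * π)] at ht
  -- compute ∫ G
  have h1 : Integrable (fun u : ℝ => (2 * π * fejerKernel Λ u) * Real.cos (u * t)) := by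
    have := (fejer_cos_integrable hΛ (fun u => Real.cos (u * t))
      (by fun_prop) (fun u => Real.abs_cos_le_one _)).const_mul (2 * π)
    apply this.congr
    filter_upwards with u
    ring
  have h2 : Integrable (fun u : ℝ => (2 * π * fejerKernel Λ u) * Real.sin (u * t)) := by
    have := (fejer_cos_integrable hΛ (fun u => Real.sin (u * t))
      (by fun_prop) (fun u => Real.abs_sin_le_one _)).const_mul (2 * π)
    apply this.congr
    filter_upwards with u
    ring
  have hsplit := integral_exp_smul_split (fun u => u * t)
    (fun u => 2 * π * fejerKernel Λ u) h1 h2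
  rw [hG, hsplit] at ht
  have hcos : (∫ u : ℝ, (2 * π * fejerKernel Λ u) * Real.cos (u * t))
      = 2 * π * ∫ u : ℝ, Real.cos (u * t) * fejerKernel Λ u := by
    rw [← MeasureTheory.integral_const_mul]
    congr 1; funext u; ring
  have hsin : (∫ u : ℝ, (2 * π * fejerKernel Λ u) * Real.sin (u * t)) = 0 := by
    have : (fun u : ℝ => (2 * π * fejerKernel Λ u) * Real.sin (u * t))
        = fun u : ℝ => 2 * π * (Real.sin (u * t) * fejerKernel Λ u) := by
      funext u; ring
    rw [this, MeasureTheory.integral_const_mul, fejer_sin_integral hΛ t, mul_zero]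
  rw [hcos, hsin] at ht
  simp only [Complex.ofReal_zero, zero_mul, add_zero, abs_of_pos (by positivity :
    (0:ℝ) < (2 * π)⁻¹), hψ] at ht
  rw [Complex.real_smul, ← Complex.ofReal_mul] at ht
  have h := Complex.ofReal_inj.mp ht
  rwa [inv_mul_cancel_left₀ h2π] at h

end D

/-- Two-way Fejér identity (Lemma 1.2): for all `γ, t ∈ ℝ`,
`1 − max(1 − |t|/Λ, 0)·cos(γt) = ∫ (1 − cos(ξt)) F_Λ(γ − ξ) dξ`. -/
theorem two_way_fejer (Λ : ℝ) (hΛ : 0 < Λ) (γ t : ℝ) :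
    1 - max (1 - |t| / Λ) 0 * Real.cos (γ * t)
      = ∫ ξ : ℝ, (1 - Real.cos (ξ * t)) * fejerKernel Λ (γ - ξ) := by
  have hFshift : Integrable (fun ξ : ℝ => fejerKernel Λ (γ - ξ)) :=
    (fejer_integrable hΛ).comp_sub_left γ
  have hcos_shift : Integrable (fun ξ : ℝ => Real.cos (ξ * t) * fejerKernel Λ (γ - ξ)) := by
    have hm : Measurable fun ξ : ℝ => Real.cos (ξ * t) * fejerKernel Λ (γ - ξ) :=
      ((by fun_prop : Continuous fun ξ : ℝ => Real.cos (ξ * t)).measurable).mul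
        ((fejer_measurable Λ).comp (by fun_prop : Measurable fun ξ : ℝ => γ - ξ))
    apply hFshift.mono' hm.aestronglyMeasurable
    filter_upwards with ξ
    rw [Real.norm_eq_abs, abs_mul, abs_of_nonneg (fejer_nonneg hΛ _)]
    calc |Real.cos (ξ * t)| * fejerKernel Λ (γ - ξ)
        ≤ 1 * fejerKernel Λ (γ - ξ) :=
          mul_le_mul_of_nonneg_right (Real.abs_cos_le_one _) (fejer_nonneg hΛ _)
      _ = fejerKernel Λ (γ - ξ) := one_mul _
  have hsplit : (∫ ξ : ℝ, (1 - Real.cos (ξ * t)) * fejerKernel Λ (γ - ξ))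
      = (∫ ξ : ℝ, fejerKernel Λ (γ - ξ)) - ∫ ξ : ℝ, Real.cos (ξ * t) * fejerKernel Λ (γ - ξ) := by
    rw [← integral_sub hFshift hcos_shift]
    congr 1; funext ξ; ring
  have hone : (∫ ξ : ℝ, fejerKernel Λ (γ - ξ)) = 1 := by
    rw [integral_sub_left_eq_self (fejerKernel Λ) volume γ]
    have := fejer_cos_integral hΛ 0
    simpa using this
  have hcosint : (∫ ξ : ℝ, Real.cos (ξ * t) * fejerKernel Λ (γ - ξ))
      = max (1 - |t| / Λ) 0 * Real.cos (γ * t) := by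
    have hshift : (∫ ξ : ℝ, Real.cos (ξ * t) * fejerKernel Λ (γ - ξ))
        = ∫ u : ℝ, Real.cos ((γ - u) * t) * fejerKernel Λ u := by
      rw [← integral_sub_left_eq_self (fun u => Real.cos ((γ - u) * t) * fejerKernel Λ u) volume γ]
      congr 1; funext ξ
      rw [show γ - (γ - ξ) = ξ by ring]
    rw [hshift]
    have hexp : ∀ u : ℝ, Real.cos ((γ - u) * t) * fejerKernel Λ u
        = Real.cos (γ * t) * (Real.cos (u * t) * fejerKernel Λ u)
          + Real.sin (γ * t) * (Real.sin (u * t) * fejerKernel Λ u) := by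
      intro u
      rw [show (γ - u) * t = γ * t - u * t by ring, Real.cos_sub]
      ring
    simp_rw [hexp]
    rw [integral_add ((fejer_cos_integrable hΛ (fun u => Real.cos (u * t)) (by fun_prop)
          (fun u => Real.abs_cos_le_one _)).const_mul _)
        ((fejer_cos_integrable hΛ (fun u => Real.sin (u * t)) (by fun_prop)
          (fun u => Real.abs_sin_le_one _)).const_mul _),
      MeasureTheory.integral_const_mul, MeasureTheory.integral_const_mul,
      fejer_cos_integral hΛ t, fejer_sin_integral hΛ t]
    ring
  rw [hsplit, hone, hcosint]
end

section
/- Let η : ℝ → [0, ∞) and let φ, ψ : ℝ → ℝ be functions with φ ≤ 0 bounded and measurable, satisfying the feasibility condition φ(γ) + ψ(t) ≤ η(t)·(1 − cos(γt)) for all γ, t ∈ ℝ. Let F : ℝ → [0, ∞) be even, integrable, with ∫_ℝ F = 1, and set F̂(t) = ∫_ℝ F(u) cos(ut) du and (F*φ)(γ) = ∫_ℝ F(γ − ξ)·φ(ξ) dξ. Then for all γ, t ∈ ℝ one has (F*φ)(γ) + ψ(t) ≤ η(t)·(1 − F̂(t)·cos(γt)). -/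
open MeasureTheory Real

/-- Convolved feasibility step (eq. (conv-step) of the paper): if `φ ≤ 0` is bounded
and measurable, `η ≥ 0`, the pair `(φ, ψ)` satisfies the feasibility condition
`φ(γ) + ψ(t) ≤ η(t)(1 − cos(γt))`, and `F` is an even nonnegative integrable
probability density with cosine transform `F̂(t) = ∫ F(u) cos(ut) du`, then
`(F*φ)(γ) + ψ(t) ≤ η(t)(1 − F̂(t) cos(γt))` for all `γ, t`. -/
theorem convolved_feasibility (η φ ψ : ℝ → ℝ)
    (hη : ∀ t, 0 ≤ η t)
    (hφ_nonpos : ∀ γ, φ γ ≤ 0) (hφ_bdd : ∃ C, ∀ γ, |φ γ| ≤ C) (hφ_meas : Measurable φ)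
    (hfeas : ∀ γ t, φ γ + ψ t ≤ η t * (1 - Real.cos (γ * t)))
    (F : ℝ → ℝ) (hF_nonneg : ∀ x, 0 ≤ F x) (hF_even : ∀ x, F (-x) = F x)
    (hF_int : Integrable F (volume : Measure ℝ)) (hF_mass : ∫ x : ℝ, F x = 1)
    (γ t : ℝ) :
    (∫ ξ : ℝ, F (γ - ξ) * φ ξ) + ψ t
      ≤ η t * (1 - (∫ u : ℝ, F u * Real.cos (u * t)) * Real.cos (γ * t)) := by
  obtain ⟨C, hC⟩ := hφ_bdd
  have hFγ : Integrable (fun ξ : ℝ => F (γ - ξ)) := hF_int.comp_sub_left γ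
  have hFγ_mass : ∫ ξ : ℝ, F (γ - ξ) = 1 := by
    rw [integral_sub_left_eq_self F (volume : Measure ℝ) γ, hF_mass]
  -- integrability of the various products
  have hInt1 : Integrable (fun ξ : ℝ => F (γ - ξ) * φ ξ) := by
    refine hFγ.bdd_mul (c := C) (hφ_meas.aestronglyMeasurable) ?_ |>.congr ?_
    · exact Filter.Eventually.of_forall fun ξ => by simpa using hC ξ
    · exact Filter.Eventually.of_forall fun ξ => mul_comm _ _
  have hInt2 : Integrable (fun ξ : ℝ => F (γ - ξ) * Real.cos (ξ * t)) := by
    refine hFγ.bdd_mul (c := 1) ?_ ?_ |>.congr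
      (Filter.Eventually.of_forall fun ξ => mul_comm _ _)
    · exact (Real.continuous_cos.comp (continuous_id.mul continuous_const)).aestronglyMeasurable
    · exact Filter.Eventually.of_forall fun ξ => by
        simpa using Real.abs_cos_le_one (ξ * t)
  have hInt3 : Integrable (fun u : ℝ => F u * Real.cos (u * t)) := by
    refine hF_int.bdd_mul (c := 1) ?_ ?_ |>.congr
      (Filter.Eventually.of_forall fun u => mul_comm _ _)
    · exact (Real.continuous_cos.comp (continuous_id.mul continuous_const)).aestronglyMeasurable
    · exact Filter.Eventually.of_forall fun u => by
        simpa using Real.abs_cos_le_one (u * t)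
  have hInt4 : Integrable (fun u : ℝ => F u * Real.sin (u * t)) := by
    refine hF_int.bdd_mul (c := 1) ?_ ?_ |>.congr
      (Filter.Eventually.of_forall fun u => mul_comm _ _)
    · exact (Real.continuous_sin.comp (continuous_id.mul continuous_const)).aestronglyMeasurable
    · exact Filter.Eventually.of_forall fun u => by
        simpa using Real.abs_sin_le_one (u * t)
  -- the sine part vanishes by evenness of F
  have hsin0 : ∫ u : ℝ, F u * Real.sin (u * t) = 0 := by
    have h : ∫ u : ℝ, F u * Real.sin (u * t) = -∫ u : ℝ, F u * Real.sin (u * t) := by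
      calc ∫ u : ℝ, F u * Real.sin (u * t)
          = ∫ u : ℝ, F (-u) * Real.sin (-u * t) := by
            rw [← integral_neg_eq_self (fun u : ℝ => F u * Real.sin (u * t))]
        _ = ∫ u : ℝ, -(F u * Real.sin (u * t)) := by
            congr 1; funext u; rw [hF_even, neg_mul, Real.sin_neg, mul_neg]
        _ = -∫ u : ℝ, F u * Real.sin (u * t) := integral_neg _
    linarith
  -- the Fejér identity
  have hFejer : ∫ ξ : ℝ, F (γ - ξ) * Real.cos (ξ * t)
      = (∫ u : ℝ, F u * Real.cos (u * t)) * Real.cos (γ * t) := by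
    have hsub := integral_sub_left_eq_self
      (fun u : ℝ => F u * Real.cos ((γ - u) * t)) (volume : Measure ℝ) γ
    have hLHS : (∫ ξ : ℝ, F (γ - ξ) * Real.cos ((γ - (γ - ξ)) * t))
        = ∫ u : ℝ, F u * Real.cos ((γ - u) * t) := hsub
    simp only [sub_sub_cancel] at hLHS
    rw [hLHS]
    calc ∫ u : ℝ, F u * Real.cos ((γ - u) * t)
        = ∫ u : ℝ, (Real.cos (γ * t) * (F u * Real.cos (u * t))
            + Real.sin (γ * t) * (F u * Real.sin (u * t))) := by
          congr 1; funext u; rw [sub_mul, Real.cos_sub]; ring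
      _ = Real.cos (γ * t) * (∫ u : ℝ, F u * Real.cos (u * t))
            + Real.sin (γ * t) * (∫ u : ℝ, F u * Real.sin (u * t)) := by
          rw [integral_add (hInt3.const_mul _) (hInt4.const_mul _),
            integral_const_mul, integral_const_mul]
      _ = (∫ u : ℝ, F u * Real.cos (u * t)) * Real.cos (γ * t) := by
          rw [hsin0]; ring
  -- convolving the feasibility inequality
  have hL : Integrable (fun ξ : ℝ => F (γ - ξ) * (φ ξ + ψ t)) := by
    have := hInt1.add (hFγ.mul_const (ψ t))
    exact this.congr (Filter.Eventually.of_forall fun ξ => by simp [mul_add])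
  have hReq : (fun ξ : ℝ => F (γ - ξ) * (η t * (1 - Real.cos (ξ * t))))
      = fun ξ : ℝ => η t * F (γ - ξ) - η t * (F (γ - ξ) * Real.cos (ξ * t)) :=
    funext fun ξ => by ring
  have hR : Integrable (fun ξ : ℝ => F (γ - ξ) * (η t * (1 - Real.cos (ξ * t)))) := by
    rw [hReq]; exact (hFγ.const_mul _).sub (hInt2.const_mul _)
  have hmono : ∫ ξ : ℝ, F (γ - ξ) * (φ ξ + ψ t)
      ≤ ∫ ξ : ℝ, F (γ - ξ) * (η t * (1 - Real.cos (ξ * t))) :=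
    integral_mono hL hR fun ξ => mul_le_mul_of_nonneg_left (hfeas ξ t) (hF_nonneg _)
  have hLval : ∫ ξ : ℝ, F (γ - ξ) * (φ ξ + ψ t)
      = (∫ ξ : ℝ, F (γ - ξ) * φ ξ) + ψ t := by
    simp_rw [mul_add]
    rw [integral_add hInt1 (hFγ.mul_const _), integral_mul_const, hFγ_mass, one_mul]
  have hRval : ∫ ξ : ℝ, F (γ - ξ) * (η t * (1 - Real.cos (ξ * t)))
      = η t * (1 - ∫ ξ : ℝ, F (γ - ξ) * Real.cos (ξ * t)) := by
    rw [hReq, integral_sub (hFγ.const_mul _) (hInt2.const_mul _),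
      integral_const_mul, integral_const_mul, hFγ_mass]
    ring
  rw [hLval, hRval, hFejer] at hmono
  exact hmono
end
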